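/- For every positive real number x, the digamma function satisfies ψ(x+1) > ln(x + 1/2). -/

import Mathlib

/-- The digamma function `ψ(x) = Γ'(x)/Γ(x)`. -/
noncomputable def digamma (x : ℝ) : ℝ := deriv Real.Gamma x / Real.Gamma x

namespace DigammaAux

open Real Set Filter Topology

noncomputable def f : ℝ → ℝ := Real.log ∘ Real.Gamma

lemma hder {x : ℝ} (hx : 0 < x) : DifferentiableAt ℝ f x := by
  refine ((Real.differentiableAt_Gamma ?_).log (Real.Gamma_ne_zero ?_)) <;>
    exact fun m ↦ ne_of_gt (by have := Nat.cast_nonneg (α := ℝ) m; linarith)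

lemma h_rec (x : ℝ) (hx : 0 < x) : f (x + 1) = f x + Real.log x := by
  simp only [f, Function.comp_apply, Real.Gamma_add_one hx.ne',
    Real.log_mul hx.ne' (Real.Gamma_pos_of_pos hx).ne', add_comm]

lemma deriv_f_eq {x : ℝ} (hx : 0 < x) : deriv f x = digamma x := by
  have h1 : DifferentiableAt ℝ Real.Gamma x :=
    Real.differentiableAt_Gamma fun m ↦ ne_of_gt (by have := Nat.cast_nonneg (α := ℝ) m; linarith)
  have h2 : Real.Gamma x ≠ 0 := (Real.Gamma_pos_of_pos hx).ne'
  have : deriv (fun y => Real.log (Real.Gamma y)) x = deriv Real.Gamma x / Real.Gamma x :=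
    deriv.log h1 h2
  simpa [f, Function.comp_def, digamma] using this

lemma hder_rec (x : ℝ) (hx : 0 < x) : deriv f (x + 1) = deriv f x + 1 / x := by
  rw [← deriv_comp_add_const, one_div, ← Real.deriv_log,
    ← deriv_add (hder hx) (Real.differentiableAt_log hx.ne')]
  apply Filter.EventuallyEq.deriv_eq
  filter_upwards [eventually_gt_nhds hx] using h_rec

lemma derivLB (t : ℝ) (ht : 0 < t) : Real.log t ≤ deriv f (t + 1) := by
  have hc : ConvexOn ℝ (Ioi 0) f := Real.convexOn_log_Gamma
  refine (le_of_eq ?_).trans <| hc.slope_le_deriv (mem_Ioi.mpr ht)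
    (mem_Ioi.mpr (by linarith)) (by linarith) (hder (by linarith))
  rw [slope_def_field, show t + 1 - t = (1 : ℝ) by ring, div_one, h_rec t ht,
    add_sub_cancel_left]

lemma derivUB (t : ℝ) (ht : 0 < t) : deriv f (t + 1) ≤ Real.log (t + 1) := by
  have hc : ConvexOn ℝ (Ioi 0) f := Real.convexOn_log_Gamma
  refine (hc.deriv_le_slope (mem_Ioi.mpr (by linarith : (0:ℝ) < t + 1))
    (mem_Ioi.mpr (by linarith : (0:ℝ) < t + 2)) (by linarith)
    (hder (by linarith))).trans (le_of_eq ?_)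
  rw [slope_def_field, show t + 2 - (t + 1) = (1 : ℝ) by ring, div_one,
    show t + 2 = (t + 1) + (1 : ℝ) by ring, h_rec (t + 1) (by linarith), add_sub_cancel_left]

lemma hasDerivAt_phi (y t : ℝ) (hy : 0 < y) (ht : 0 < t) :
    HasDerivAt (fun t => Real.log t - 2 * (t - y) / (t + y))
      (1 / t - 4 * y / (t + y) ^ 2) t := by
  have h1 : HasDerivAt Real.log t⁻¹ t := Real.hasDerivAt_log ht.ne'
  have hn : HasDerivAt (fun t : ℝ => 2 * (t - y)) 2 t := by
    simpa using ((hasDerivAt_id t).sub_const y).const_mul 2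
  have hd : HasDerivAt (fun t : ℝ => t + y) 1 t := (hasDerivAt_id t).add_const y
  have hden : t + y ≠ 0 := by positivity
  have h2 := hn.div hd hden
  convert h1.sub h2 using 1
  · rfl
  · rfl
  · rfl
  rw [show 2 * (t + y) - 2 * (t - y) * 1 = 4 * y by ring, one_div]

lemma log_ineq {y : ℝ} (hy : 0 < y) : 1 / (y + 1 / 2) < Real.log (y + 1) - Real.log y := by
  set φ : ℝ → ℝ := fun t => Real.log t - 2 * (t - y) / (t + y) with hφ
  have key : StrictMonoOn φ (Ici y) := by
    apply strictMonoOn_of_deriv_pos (convex_Ici y)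
    · intro t ht
      exact (hasDerivAt_phi y t hy (hy.trans_le ht)).continuousAt.continuousWithinAt
    · intro t ht
      rw [interior_Ici] at ht
      have ht' : 0 < t := hy.trans ht
      rw [(hasDerivAt_phi y t hy ht').deriv]
      rw [sub_pos, div_lt_div_iff₀ (by positivity) ht']
      have h0 : 0 < (t - y) ^ 2 := pow_pos (sub_pos.mpr ht) 2
      nlinarith
  have h2 := key self_mem_Ici (show y + 1 ∈ Ici y by simp [le_add_of_nonneg_right]) (lt_add_one y)
  simp only [hφ, sub_self, zero_div, mul_zero, sub_zero] at h2
  have e : 2 * (y + 1 - y) / (y + 1 + y) = 1 / (y + 1 / 2) := by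
    rw [show y + 1 - y = (1 : ℝ) by ring]
    rw [div_eq_div_iff (by linarith) (by linarith)]
    ring
  rw [e] at h2
  linarith

/-- `P x = ψ(x+1) - log(x+1/2)` -/
noncomputable def P (x : ℝ) : ℝ := deriv f (x + 1) - Real.log (x + 1 / 2)

lemma P_step {x : ℝ} (hx : 0 < x) : P (x + 1) < P x := by
  have hrec := hder_rec (x + 1) (by linarith)
  have hlog := log_ineq (y := x + 1 / 2) (by linarith)
  have e1 : x + 1 / 2 + 1 / 2 = x + 1 := by ring
  have e2 : x + 1 / 2 + 1 = x + 1 + 1 / 2 := by ring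
  rw [e1, e2] at hlog
  simp only [P]
  have : deriv f (x + 1 + 1) = deriv f (x + 1) + 1 / (x + 1) := by
    rw [hrec]
  rw [this]
  linarith

lemma P_mono (x : ℝ) (hx : 0 < x) (n : ℕ) : P (x + n) ≤ P x := by
  induction n with
  | zero => simp
  | succ n ih =>
      have h1 : P (x + n + 1) < P (x + n) := P_step (by positivity)
      have : x + (n + 1 : ℕ) = x + n + 1 := by push_cast; ring
      rw [this]
      linarith

lemma tendsto_log_diff (x a b : ℝ) (ha : 0 < x + a) (hb : 0 < x + b) :
    Tendsto (fun n : ℕ => Real.log (x + n + a) - Real.log (x + n + b)) atTop (𝓝 0) := by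
  have hbn : ∀ n : ℕ, 0 < x + n + b := fun n => by
    have : (0:ℝ) ≤ n := Nat.cast_nonneg n; linarith
  have han : ∀ n : ℕ, 0 < x + n + a := fun n => by
    have : (0:ℝ) ≤ n := Nat.cast_nonneg n; linarith
  have htop : Tendsto (fun n : ℕ => x + (n : ℝ) + b) atTop atTop := by
    apply tendsto_atTop_add_const_right
    exact tendsto_atTop_add_const_left _ _ tendsto_natCast_atTop_atTop
  have h1 : Tendsto (fun n : ℕ => (x + n + a) / (x + n + b)) atTop (𝓝 1) := by
    have h0 : Tendsto (fun n : ℕ => (a - b) * (x + n + b)⁻¹) atTop (𝓝 ((a - b) * 0)) :=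
      (htop.inv_tendsto_atTop).const_mul (a - b)
    rw [mul_zero] at h0
    have := h0.const_add (1 : ℝ)
    rw [add_zero] at this
    refine this.congr fun n => ?_
    field_simp [(hbn n).ne']
    ring
  have h2 : Tendsto (fun n : ℕ => Real.log ((x + n + a) / (x + n + b))) atTop (𝓝 0) := by
    have := (Real.continuousAt_log one_ne_zero).tendsto.comp h1
    rwa [Real.log_one] at this
  refine h2.congr fun n => ?_
  rw [Real.log_div (han n).ne' (hbn n).ne']

lemma P_tendsto (x : ℝ) (hx : 0 < x) :
    Tendsto (fun n : ℕ => P (x + n)) atTop (𝓝 0) := by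
  have hL := tendsto_log_diff x 0 (1 / 2) (by linarith) (by linarith)
  have hU := tendsto_log_diff x 1 (1 / 2) (by linarith) (by linarith)
  refine tendsto_of_tendsto_of_tendsto_of_le_of_le hL hU ?_ ?_
  · intro n
    have hpos : (0:ℝ) < x + n := by have : (0:ℝ) ≤ n := Nat.cast_nonneg n; linarith
    have := derivLB (x + n) hpos
    simp only [P, add_zero]
    linarith
  · intro n
    have hpos : (0:ℝ) < x + n := by have : (0:ℝ) ≤ n := Nat.cast_nonneg n; linarith
    have := derivUB (x + n) hpos
    simp only [P]
    linarith

lemma P_pos {x : ℝ} (hx : 0 < x) : 0 < P x := by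
  have h1 : (0 : ℝ) ≤ P (x + 1) := by
    refine le_of_tendsto' (P_tendsto (x + 1) (by linarith)) fun n => ?_
    exact P_mono (x + 1) (by linarith) n
  have h2 : P (x + 1) < P x := P_step hx
  linarith

end DigammaAux

theorem digamma_lower_bound (x : ℝ) (hx : 0 < x) :
    Real.log (x + 1 / 2) < digamma (x + 1) := by
  have h := DigammaAux.P_pos hx
  have e := DigammaAux.deriv_f_eq (x := x + 1) (by linarith)
  simp only [DigammaAux.P] at h
  linarith [h, e ▸ h]
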